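/- arXiv:2502.17992 — 7 statements merged into one kernel-verified Lean document; each statement's English description precedes it below -/
import Mathlib

section
/- For all integers d ≥ 2 and δ ≥ 1, the minimum of ψ(d,δ,p) over integers p ≥ δd is attained at p₁ = δd−1+⌊δ√(d²−d)⌋ or at p₂ = p₁+1; that is, min(ψ(d,δ,p₁), ψ(d,δ,p₂)) ≤ ψ(d,δ,p) for every integer p ≥ δd. -/
open scoped Classical

/-- ψ(d,δ,x) = δd²(x−δ+1)/(x−δd+1) + d(x−δ+1) − 1 -/
noncomputable def psi (d δ : ℤ) (x : ℝ) : ℝ :=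
  (δ : ℝ) * (d : ℝ) ^ 2 * (x - (δ : ℝ) + 1) / (x - (δ : ℝ) * (d : ℝ) + 1)
    + (d : ℝ) * (x - (δ : ℝ) + 1) - 1

/-- p₁ = δd − 1 + ⌊δ√(d²−d)⌋ -/
noncomputable def p1 (d δ : ℤ) : ℤ :=
  δ * d - 1 + ⌊(δ : ℝ) * Real.sqrt ((d : ℝ) ^ 2 - (d : ℝ))⌋

/-- λ : the minimizer of ψ(d,δ,·) among p₁ and p₂ = p₁ + 1 -/
noncomputable def lam (d δ : ℤ) : ℤ :=
  if psi d δ (p1 d δ : ℝ) ≤ psi d δ ((p1 d δ : ℝ) + 1) then p1 d δ else p1 d δ + 1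

lemma psi_sub (d δ : ℤ) (x y : ℝ)
    (hx : x - (δ:ℝ) * (d:ℝ) + 1 ≠ 0) (hy : y - (δ:ℝ) * (d:ℝ) + 1 ≠ 0) :
    psi d δ x - psi d δ y =
      (x - y) * ((d:ℝ) * (x - (δ:ℝ)*(d:ℝ) + 1) * (y - (δ:ℝ)*(d:ℝ) + 1)
          - (δ:ℝ)^2 * (d:ℝ)^2 * ((d:ℝ) - 1)) /
        ((x - (δ:ℝ)*(d:ℝ) + 1) * (y - (δ:ℝ)*(d:ℝ) + 1)) := by
  unfold psi
  field_simp
  ring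

set_option maxHeartbeats 1000000 in
theorem stmt_2 (d δ : ℤ) (hd : 2 ≤ d) (hδ : 1 ≤ δ) :
    ∀ p : ℤ, δ * d ≤ p →
      min (psi d δ (p1 d δ : ℝ)) (psi d δ ((p1 d δ : ℝ) + 1)) ≤ psi d δ (p : ℝ) := by
  intro p hp
  have hd2 : (2:ℝ) ≤ (d:ℝ) := by exact_mod_cast hd
  have hδ1 : (1:ℝ) ≤ (δ:ℝ) := by exact_mod_cast hδ
  set r : ℝ := (δ:ℝ) * Real.sqrt ((d:ℝ)^2 - (d:ℝ)) with hr
  clear_value r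
  have hdd : (0:ℝ) ≤ (d:ℝ)^2 - (d:ℝ) := by nlinarith
  have hsq : Real.sqrt ((d:ℝ)^2 - (d:ℝ)) ^ 2 = (d:ℝ)^2 - (d:ℝ) := Real.sq_sqrt hdd
  have hr2 : r^2 = (δ:ℝ)^2 * ((d:ℝ)^2 - (d:ℝ)) := by rw [hr, mul_pow, hsq]
  have hr1 : (1:ℝ) ≤ r := by
    have h2 : (1:ℝ) ≤ Real.sqrt ((d:ℝ)^2 - (d:ℝ)) := by
      rw [show (1:ℝ) = Real.sqrt 1 by simp]
      apply Real.sqrt_le_sqrt; nlinarith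
    nlinarith [Real.sqrt_nonneg ((d:ℝ)^2 - (d:ℝ))]
  have ht1 : (1:ℤ) ≤ ⌊r⌋ := Int.le_floor.mpr (by exact_mod_cast hr1)
  have hfl : (⌊r⌋ : ℝ) ≤ r := Int.floor_le r
  have hfu : r < (⌊r⌋ : ℝ) + 1 := Int.lt_floor_add_one r
  have ht1R : (1:ℝ) ≤ (⌊r⌋ : ℝ) := by exact_mod_cast ht1
  -- coordinates
  have hp1R : (p1 d δ : ℝ) = (δ:ℝ)*(d:ℝ) - 1 + (⌊r⌋ : ℝ) := by
    simp only [p1]; push_cast; rw [hr]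
  have hpR : (1:ℝ) ≤ (p:ℝ) - (δ:ℝ)*(d:ℝ) + 1 := by
    have : ((δ*d : ℤ) : ℝ) ≤ (p:ℝ) := by exact_mod_cast hp
    push_cast at this; linarith
  have hnp : (p:ℝ) - (δ:ℝ)*(d:ℝ) + 1 ≠ 0 := by linarith
  have hn1 : (p1 d δ : ℝ) - (δ:ℝ)*(d:ℝ) + 1 ≠ 0 := by rw [hp1R]; intro h; linarith
  have hn2 : ((p1 d δ : ℝ) + 1) - (δ:ℝ)*(d:ℝ) + 1 ≠ 0 := by rw [hp1R]; intro h; linarith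
  rcases le_or_gt p (p1 d δ) with hle | hgt
  · -- p ≤ p1 : psi p1 ≤ psi p
    refine le_trans (min_le_left _ _) ?_
    have hsub := psi_sub d δ (p:ℝ) (p1 d δ : ℝ) hnp hn1
    have hleR : (p:ℝ) ≤ (p1 d δ : ℝ) := by exact_mod_cast hle
    have hnum : 0 ≤ ((p:ℝ) - (p1 d δ : ℝ)) *
        ((d:ℝ) * ((p:ℝ) - (δ:ℝ)*(d:ℝ) + 1) * ((p1 d δ : ℝ) - (δ:ℝ)*(d:ℝ) + 1)
          - (δ:ℝ)^2 * (d:ℝ)^2 * ((d:ℝ) - 1)) := by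
      rw [hp1R]
      have h1 : (p:ℝ) - (δ:ℝ)*(d:ℝ) + 1 ≤ (⌊r⌋ : ℝ) := by rw [hp1R] at hleR; linarith
      have hpr : (p:ℝ) - (δ:ℝ)*(d:ℝ) + 1 ≤ r := le_trans h1 hfl
      have key : ((p:ℝ) - (δ:ℝ)*(d:ℝ) + 1) * ((⌊r⌋ : ℝ)) ≤ r * r :=
        mul_le_mul hpr hfl (by linarith) (by linarith)
      have f1 : (p:ℝ) - (p1 d δ : ℝ) ≤ 0 := by linarith
      have f2 : (d:ℝ) * ((p:ℝ) - (δ:ℝ)*(d:ℝ) + 1) * ((δ:ℝ)*(d:ℝ) - 1 + (⌊r⌋ : ℝ) - (δ:ℝ)*(d:ℝ) + 1)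
          - (δ:ℝ)^2 * (d:ℝ)^2 * ((d:ℝ) - 1) ≤ 0 := by nlinarith [key, hr2, hd2]
      nlinarith [mul_nonneg (neg_nonneg.2 f1) (neg_nonneg.2 f2)]
    have hden : 0 < ((p:ℝ) - (δ:ℝ)*(d:ℝ) + 1) * ((p1 d δ : ℝ) - (δ:ℝ)*(d:ℝ) + 1) := by
      rw [hp1R]; nlinarith
    have := div_nonneg hnum hden.le
    linarith [hsub ▸ this]
  · -- p ≥ p1 + 1 : psi p2 ≤ psi p
    refine le_trans (min_le_right _ _) ?_
    have hge : p1 d δ + 1 ≤ p := hgt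
    have hgeR : (p1 d δ : ℝ) + 1 ≤ (p:ℝ) := by exact_mod_cast hge
    have hsub := psi_sub d δ (p:ℝ) ((p1 d δ : ℝ) + 1) hnp hn2
    have hnum : 0 ≤ ((p:ℝ) - ((p1 d δ : ℝ) + 1)) *
        ((d:ℝ) * ((p:ℝ) - (δ:ℝ)*(d:ℝ) + 1) * (((p1 d δ : ℝ) + 1) - (δ:ℝ)*(d:ℝ) + 1)
          - (δ:ℝ)^2 * (d:ℝ)^2 * ((d:ℝ) - 1)) := by
      apply mul_nonneg
      · linarith
      · rw [hp1R]
        have h1 : (⌊r⌋ : ℝ) + 1 ≤ (p:ℝ) - (δ:ℝ)*(d:ℝ) + 1 := by rw [hp1R] at hgeR; linarith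
        have h2 : r ≤ (⌊r⌋ : ℝ) + 1 := hfu.le
        have h3 : r ≤ (p:ℝ) - (δ:ℝ)*(d:ℝ) + 1 := le_trans h2 h1
        have key : r * r ≤ ((p:ℝ) - (δ:ℝ)*(d:ℝ) + 1) * ((⌊r⌋ : ℝ) + 1) :=
          mul_le_mul h3 h2 (by linarith) (by linarith)
        have key2 := mul_le_mul_of_nonneg_left key (show (0:ℝ) ≤ (d:ℝ) by linarith)
        have heq : (d:ℝ) * (r * r) = (δ:ℝ)^2 * (d:ℝ)^2 * ((d:ℝ) - 1) := by
          have : r * r = r ^ 2 := by ring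
          rw [this, hr2]; ring
        nlinarith [key2, heq]
    have hden : 0 < ((p:ℝ) - (δ:ℝ)*(d:ℝ) + 1) * (((p1 d δ : ℝ) + 1) - (δ:ℝ)*(d:ℝ) + 1) := by
      rw [hp1R]; nlinarith
    have := div_nonneg hnum hden.le
    linarith [hsub ▸ this]
end

section
/- For all integers d ≥ 2 and δ ≥ 1, letting λ be the integer among p₁ = δd−1+⌊δ√(d²−d)⌋ and p₂ = p₁+1 minimizing ψ(d,δ,·), we have ψ(d,δ,λ) ≥ (2d² + 2d√(d²−d) − d)δ − 1. -/
open scoped Classical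

lemma key (d δ : ℤ) (hd : 2 ≤ d) (hδ : 1 ≤ δ) (x : ℝ)
    (hx : 0 < x - (δ : ℝ) * (d : ℝ) + 1) :
    (2 * (d : ℝ) ^ 2 + 2 * (d : ℝ) * Real.sqrt ((d : ℝ) ^ 2 - (d : ℝ)) - (d : ℝ)) * (δ : ℝ) - 1
      ≤ psi d δ x := by
  have hd' : (2 : ℝ) ≤ (d : ℝ) := by exact_mod_cast hd
  have hδ' : (1 : ℝ) ≤ (δ : ℝ) := by exact_mod_cast hδ
  have hd0 : (0 : ℝ) ≤ (d : ℝ) := by linarith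
  have hδ0 : (0 : ℝ) ≤ (δ : ℝ) := by linarith
  set t : ℝ := x - (δ : ℝ) * (d : ℝ) + 1 with ht
  have ht0 : t ≠ 0 := ne_of_gt hx
  have hpsi : psi d δ x =
      (δ : ℝ) * d ^ 2 + (δ : ℝ) ^ 2 * d ^ 2 * (d - 1) / t + d * t + d * δ * (d - 1) - 1 := by
    unfold psi
    rw [ht]
    have ht1 : x - (δ : ℝ) * (d : ℝ) + 1 ≠ 0 := ht0
    field_simp [ht1]
    ring
  rw [hpsi]
  -- AM-GM
  have hA : (0 : ℝ) ≤ (δ : ℝ) ^ 2 * d ^ 2 * (d - 1) / t := by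
    apply div_nonneg _ (le_of_lt hx)
    nlinarith [sq_nonneg ((δ:ℝ)*(d:ℝ))]
  have hB : (0 : ℝ) ≤ d * t := by positivity
  have hAB : ((δ : ℝ) ^ 2 * d ^ 2 * (d - 1) / t) * (d * t) = (d * δ) ^ 2 * (d ^ 2 - d) := by
    field_simp
  have amgm : 2 * Real.sqrt (((δ : ℝ) ^ 2 * d ^ 2 * (d - 1) / t) * (d * t))
      ≤ (δ : ℝ) ^ 2 * d ^ 2 * (d - 1) / t + d * t := by
    have h1 := Real.sqrt_nonneg (((δ : ℝ) ^ 2 * d ^ 2 * (d - 1) / t))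
    have h2 := Real.sqrt_nonneg (d * t)
    have h3 := two_mul_le_add_sq (Real.sqrt ((δ : ℝ) ^ 2 * d ^ 2 * (d - 1) / t)) (Real.sqrt (d * t))
    rw [Real.sq_sqrt hA, Real.sq_sqrt hB] at h3
    rw [Real.sqrt_mul hA]
    linarith
  rw [hAB, Real.sqrt_mul (by positivity), Real.sqrt_sq (by positivity)] at amgm
  nlinarith [Real.sqrt_nonneg ((d : ℝ) ^ 2 - d)]

theorem stmt_3 (d δ : ℤ) (hd : 2 ≤ d) (hδ : 1 ≤ δ) :
    (2 * (d : ℝ) ^ 2 + 2 * (d : ℝ) * Real.sqrt ((d : ℝ) ^ 2 - (d : ℝ)) - (d : ℝ)) * (δ : ℝ) - 1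
      ≤ psi d δ (lam d δ : ℝ) := by
  apply key d δ hd hδ
  have hd' : (2 : ℝ) ≤ (d : ℝ) := by exact_mod_cast hd
  have hδ' : (1 : ℝ) ≤ (δ : ℝ) := by exact_mod_cast hδ
  have hs : (1 : ℝ) ≤ Real.sqrt ((d : ℝ) ^ 2 - (d : ℝ)) := by
    rw [show (1 : ℝ) = Real.sqrt 1 by simp]
    apply Real.sqrt_le_sqrt
    nlinarith
  have hfloor : 1 ≤ ⌊(δ : ℝ) * Real.sqrt ((d : ℝ) ^ 2 - (d : ℝ))⌋ := by
    rw [Int.le_floor]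
    push_cast
    nlinarith
  have hp1 : δ * d ≤ p1 d δ := by
    unfold p1; omega
  have : δ * d ≤ lam d δ := by
    unfold lam; split <;> omega
  have : (δ : ℝ) * (d : ℝ) ≤ (lam d δ : ℝ) := by exact_mod_cast this
  linarith
end

section
/- For all integers d ≥ 2 and δ ≥ 1, with λ as the minimizer of ψ(d,δ,·) among p₁ = δd−1+⌊δ√(d²−d)⌋ and p₂ = p₁+1, we have ψ(d,δ,λ) ≤ (2d² + 2d√(d²−d) − d)δ − 1 + d/(δ√(d²−d) − 1). -/
open scoped Classical

theorem stmt_4 (d δ : ℤ) (hd : 2 ≤ d) (hδ : 1 ≤ δ) :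
    psi d δ (lam d δ : ℝ) ≤
      (2 * (d : ℝ) ^ 2 + 2 * (d : ℝ) * Real.sqrt ((d : ℝ) ^ 2 - (d : ℝ)) - (d : ℝ)) * (δ : ℝ)
        - 1 + (d : ℝ) / ((δ : ℝ) * Real.sqrt ((d : ℝ) ^ 2 - (d : ℝ)) - 1) := by
  have hD : (2:ℝ) ≤ (d:ℝ) := by exact_mod_cast hd
  have hDe : (1:ℝ) ≤ (δ:ℝ) := by exact_mod_cast hδ
  have hnn : (0:ℝ) ≤ (d:ℝ)^2 - (d:ℝ) := by nlinarith
  have hr2 : Real.sqrt ((d:ℝ)^2 - (d:ℝ)) ^ 2 = (d:ℝ)^2 - (d:ℝ) := Real.sq_sqrt hnn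
  have hrnn : (0:ℝ) ≤ Real.sqrt ((d:ℝ)^2 - (d:ℝ)) := Real.sqrt_nonneg _
  have hr1 : (1:ℝ) < Real.sqrt ((d:ℝ)^2 - (d:ℝ)) := by nlinarith
  set r := Real.sqrt ((d:ℝ)^2 - (d:ℝ)) with hrdef
  have hs1 : (1:ℝ) < (δ:ℝ) * r := by nlinarith
  have hf1 : (1:ℤ) ≤ ⌊(δ:ℝ) * r⌋ := Int.le_floor.mpr (by exact_mod_cast hs1.le)
  have hF1 : (1:ℝ) ≤ ((⌊(δ:ℝ) * r⌋ : ℤ) : ℝ) := by exact_mod_cast hf1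
  set F := ((⌊(δ:ℝ) * r⌋ : ℤ) : ℝ) with hFdef
  have hFle : F ≤ (δ:ℝ) * r := Int.floor_le _
  have hFlt : (δ:ℝ) * r < F + 1 := Int.lt_floor_add_one _
  have hFpos : (0:ℝ) < F := by linarith
  have hspos : (0:ℝ) < (δ:ℝ) * r - 1 := by linarith
  have hp1 : ((p1 d δ : ℤ) : ℝ) = (δ:ℝ) * (d:ℝ) - 1 + F := by
    rw [hFdef, p1]; push_cast; ring
  have hlam : psi d δ (lam d δ : ℝ) ≤ psi d δ (p1 d δ : ℝ) := by
    rw [lam]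
    split_ifs with h
    · exact le_refl _
    · rw [show ((p1 d δ + 1 : ℤ) : ℝ) = ((p1 d δ : ℤ) : ℝ) + 1 by push_cast; ring]
      linarith [not_le.mp h]
  refine hlam.trans ?_
  rw [psi, hp1]
  have hden : (δ:ℝ) * (d:ℝ) - 1 + F - (δ:ℝ) * (d:ℝ) + 1 = F := by ring
  rw [hden]
  have core : (d:ℝ) * ((δ:ℝ)*r)^2 / F + (d:ℝ) * F - 2 * (d:ℝ) * ((δ:ℝ)*r)
      ≤ (d:ℝ) / ((δ:ℝ)*r - 1) := by
    have h2 : (d:ℝ) * ((δ:ℝ)*r)^2 / F + (d:ℝ) * F - 2 * (d:ℝ) * ((δ:ℝ)*r)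
        = (d:ℝ) * ((δ:ℝ)*r - F)^2 / F := by
      field_simp; ring
    rw [h2, div_le_div_iff₀ hFpos hspos]
    have hu : (0:ℝ) ≤ (δ:ℝ)*r - F := by linarith
    have hkey : ((δ:ℝ)*r - F)^2 * ((δ:ℝ)*r - 1) ≤ F := by
      nlinarith [mul_nonneg hu hspos.le, mul_nonneg (by linarith : (0:ℝ) ≤ 1 - ((δ:ℝ)*r - F)) (mul_nonneg hu hspos.le),
        mul_nonneg (by linarith : (0:ℝ) ≤ 1 - ((δ:ℝ)*r - F)) hspos.le]
    nlinarith [mul_le_mul_of_nonneg_left hkey (by linarith : (0:ℝ) ≤ (d:ℝ))]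
  have hsplit : (δ:ℝ) * (d:ℝ)^2 * ((δ:ℝ)*(d:ℝ) - 1 + F - (δ:ℝ) + 1) / F
      = (d:ℝ) * ((δ:ℝ)*r)^2 / F + (δ:ℝ) * (d:ℝ)^2 := by
    field_simp
    linear_combination (-(δ:ℝ)) * hr2
  rw [hsplit]
  nlinarith [core]
end

section
/- For all integers d ≥ 2 and δ ≥ 1, letting λ(δ) be the integer among δd−1+⌊δ√(d²−d)⌋ and δd+⌊δ√(d²−d)⌋ minimizing ψ(d,δ,·), the function δ ↦ ψ(d,δ,λ(δ)) is strictly increasing: ψ(d,δ+1,λ(δ+1)) > ψ(d,δ,λ(δ)). -/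
open scoped Classical

lemma psi_eq (d δ : ℤ) (t : ℝ) (ht : t ≠ 0) :
    psi d δ ((δ : ℝ) * (d : ℝ) - 1 + t)
      = (d : ℝ) * t + (δ : ℝ) ^ 2 * (d : ℝ) ^ 2 * ((d : ℝ) - 1) / t
        + (δ : ℝ) * (2 * (d : ℝ) ^ 2 - (d : ℝ)) - 1 := by
  unfold psi
  have h : (δ : ℝ) * (d : ℝ) - 1 + t - (δ : ℝ) * (d : ℝ) + 1 = t := by ring
  rw [h]
  field_simp
  ring

lemma sqrt_fact (d : ℤ) (hd : 2 ≤ d) :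
    Real.sqrt ((d : ℝ) ^ 2 - (d : ℝ)) ^ 2 = (d : ℝ) ^ 2 - (d : ℝ) ∧
      1 ≤ Real.sqrt ((d : ℝ) ^ 2 - (d : ℝ)) := by
  have hd' : (2 : ℝ) ≤ (d : ℝ) := by exact_mod_cast hd
  constructor
  · exact Real.sq_sqrt (by nlinarith)
  · rw [show (1 : ℝ) = Real.sqrt 1 from Real.sqrt_one.symm]
    exact Real.sqrt_le_sqrt (by nlinarith)

lemma g_lower (d δ : ℤ) (hd : 2 ≤ d) (hδ : 1 ≤ δ) (t : ℝ) (ht : 1 ≤ t) :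
    2 * (d : ℝ) * ((δ : ℝ) * Real.sqrt ((d : ℝ) ^ 2 - (d : ℝ)))
      + (δ : ℝ) * (2 * (d : ℝ) ^ 2 - (d : ℝ)) - 1
      ≤ psi d δ ((δ : ℝ) * (d : ℝ) - 1 + t) := by
  have hd' : (2 : ℝ) ≤ (d : ℝ) := by exact_mod_cast hd
  have hδ' : (1 : ℝ) ≤ (δ : ℝ) := by exact_mod_cast hδ
  have ht0 : (0 : ℝ) < t := by linarith
  obtain ⟨hs2, hs1⟩ := sqrt_fact d hd
  set s : ℝ := Real.sqrt ((d : ℝ) ^ 2 - (d : ℝ))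
  rw [psi_eq d δ t (ne_of_gt ht0)]
  have hQ : (δ : ℝ) ^ 2 * (d : ℝ) ^ 2 * ((d : ℝ) - 1) / t * t
      = (δ : ℝ) ^ 2 * (d : ℝ) ^ 2 * ((d : ℝ) - 1) :=
    div_mul_cancel₀ _ (ne_of_gt ht0)
  have hkey : (d : ℝ) * t * t + (δ : ℝ) ^ 2 * (d : ℝ) ^ 2 * ((d : ℝ) - 1)
      - 2 * (d : ℝ) * ((δ : ℝ) * s) * t = (d : ℝ) * (t - (δ : ℝ) * s) ^ 2 := by
    linear_combination (-(d : ℝ) * (δ : ℝ) ^ 2) * hs2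
  have hnn : (0 : ℝ) ≤ (d : ℝ) * (t - (δ : ℝ) * s) ^ 2 :=
    mul_nonneg (by linarith) (sq_nonneg _)
  have h3 : 2 * (d : ℝ) * ((δ : ℝ) * s) - (d : ℝ) * t
      ≤ (δ : ℝ) ^ 2 * (d : ℝ) ^ 2 * ((d : ℝ) - 1) / t := by
    rw [le_div_iff₀ ht0]
    nlinarith [hkey, hnn]
  linarith [h3]

lemma g_upper (d δ : ℤ) (hd : 2 ≤ d) (hδ : 1 ≤ δ) (t : ℝ) (ht : 1 ≤ t)
    (hlo : (δ : ℝ) * Real.sqrt ((d : ℝ) ^ 2 - (d : ℝ)) ≤ t)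
    (hhi : t ≤ (δ : ℝ) * Real.sqrt ((d : ℝ) ^ 2 - (d : ℝ)) + 1) :
    psi d δ ((δ : ℝ) * (d : ℝ) - 1 + t)
      ≤ 2 * (d : ℝ) * ((δ : ℝ) * Real.sqrt ((d : ℝ) ^ 2 - (d : ℝ)))
        + (δ : ℝ) * (2 * (d : ℝ) ^ 2 - (d : ℝ)) - 1 + (d : ℝ) := by
  have hd' : (2 : ℝ) ≤ (d : ℝ) := by exact_mod_cast hd
  have hδ' : (1 : ℝ) ≤ (δ : ℝ) := by exact_mod_cast hδ
  have ht0 : (0 : ℝ) < t := by linarith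
  obtain ⟨hs2, hs1⟩ := sqrt_fact d hd
  set s : ℝ := Real.sqrt ((d : ℝ) ^ 2 - (d : ℝ))
  rw [psi_eq d δ t (ne_of_gt ht0)]
  have hQ : (δ : ℝ) ^ 2 * (d : ℝ) ^ 2 * ((d : ℝ) - 1) / t * t
      = (δ : ℝ) ^ 2 * (d : ℝ) ^ 2 * ((d : ℝ) - 1) :=
    div_mul_cancel₀ _ (ne_of_gt ht0)
  have he : (t - (δ : ℝ) * s) ^ 2 ≤ t := by nlinarith
  have hkey : (δ : ℝ) ^ 2 * (d : ℝ) ^ 2 * ((d : ℝ) - 1) + (d : ℝ) * t * t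
      - 2 * (d : ℝ) * ((δ : ℝ) * s) * t = (d : ℝ) * (t - (δ : ℝ) * s) ^ 2 := by
    linear_combination (-(d : ℝ) * (δ : ℝ) ^ 2) * hs2
  have hde : (d : ℝ) * (t - (δ : ℝ) * s) ^ 2 ≤ (d : ℝ) * t :=
    mul_le_mul_of_nonneg_left he (by linarith)
  have h3 : (δ : ℝ) ^ 2 * (d : ℝ) ^ 2 * ((d : ℝ) - 1) / t
      ≤ 2 * (d : ℝ) * ((δ : ℝ) * s) + (d : ℝ) - (d : ℝ) * t := by
    rw [div_le_iff₀ ht0]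
    nlinarith [hkey, hde]
  linarith [h3]

lemma floor_ge_one (d δ : ℤ) (hd : 2 ≤ d) (hδ : 1 ≤ δ) :
    1 ≤ ⌊(δ : ℝ) * Real.sqrt ((d : ℝ) ^ 2 - (d : ℝ))⌋ := by
  obtain ⟨hs2, hs1⟩ := sqrt_fact d hd
  have hδ' : (1 : ℝ) ≤ (δ : ℝ) := by exact_mod_cast hδ
  rw [Int.le_floor]
  push_cast
  nlinarith

lemma floor_props (d δ : ℤ) :
    (⌊(δ : ℝ) * Real.sqrt ((d : ℝ) ^ 2 - (d : ℝ))⌋ : ℝ)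
      ≤ (δ : ℝ) * Real.sqrt ((d : ℝ) ^ 2 - (d : ℝ)) ∧
    (δ : ℝ) * Real.sqrt ((d : ℝ) ^ 2 - (d : ℝ))
      < (⌊(δ : ℝ) * Real.sqrt ((d : ℝ) ^ 2 - (d : ℝ))⌋ : ℝ) + 1 :=
  ⟨Int.floor_le _, Int.lt_floor_add_one _⟩

lemma main_lower (d δ : ℤ) (hd : 2 ≤ d) (hδ : 1 ≤ δ) :
    2 * (d : ℝ) * ((δ : ℝ) * Real.sqrt ((d : ℝ) ^ 2 - (d : ℝ)))
      + (δ : ℝ) * (2 * (d : ℝ) ^ 2 - (d : ℝ)) - 1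
      ≤ psi d δ (lam d δ : ℝ) := by
  have hm := floor_ge_one d δ hd hδ
  have hmR : (1 : ℝ) ≤ (⌊(δ : ℝ) * Real.sqrt ((d : ℝ) ^ 2 - (d : ℝ))⌋ : ℝ) := by
    exact_mod_cast hm
  unfold lam
  split_ifs with h
  · have hx : ((p1 d δ : ℤ) : ℝ)
        = (δ : ℝ) * (d : ℝ) - 1 + (⌊(δ : ℝ) * Real.sqrt ((d : ℝ) ^ 2 - (d : ℝ))⌋ : ℝ) := by
      unfold p1; push_cast; ring
    rw [hx]
    exact g_lower d δ hd hδ _ hmR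
  · have hx : ((p1 d δ + 1 : ℤ) : ℝ)
        = (δ : ℝ) * (d : ℝ) - 1
          + ((⌊(δ : ℝ) * Real.sqrt ((d : ℝ) ^ 2 - (d : ℝ))⌋ : ℝ) + 1) := by
      unfold p1; push_cast; ring
    rw [hx]
    exact g_lower d δ hd hδ _ (by linarith)

lemma main_upper (d δ : ℤ) (hd : 2 ≤ d) (hδ : 1 ≤ δ) :
    psi d δ (lam d δ : ℝ)
      ≤ 2 * (d : ℝ) * ((δ : ℝ) * Real.sqrt ((d : ℝ) ^ 2 - (d : ℝ)))
        + (δ : ℝ) * (2 * (d : ℝ) ^ 2 - (d : ℝ)) - 1 + (d : ℝ) := by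
  have hm := floor_ge_one d δ hd hδ
  have hmR : (1 : ℝ) ≤ (⌊(δ : ℝ) * Real.sqrt ((d : ℝ) ^ 2 - (d : ℝ))⌋ : ℝ) := by
    exact_mod_cast hm
  obtain ⟨hfl, hfu⟩ := floor_props d δ
  have hx : ((p1 d δ : ℤ) : ℝ) + 1
      = (δ : ℝ) * (d : ℝ) - 1
        + ((⌊(δ : ℝ) * Real.sqrt ((d : ℝ) ^ 2 - (d : ℝ))⌋ : ℝ) + 1) := by
    unfold p1; push_cast; ring
  have hup : psi d δ (((p1 d δ : ℤ) : ℝ) + 1)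
      ≤ 2 * (d : ℝ) * ((δ : ℝ) * Real.sqrt ((d : ℝ) ^ 2 - (d : ℝ)))
        + (δ : ℝ) * (2 * (d : ℝ) ^ 2 - (d : ℝ)) - 1 + (d : ℝ) := by
    rw [hx]
    exact g_upper d δ hd hδ _ (by linarith) (by linarith) (by linarith)
  unfold lam
  split_ifs with h
  · exact le_trans h hup
  · have : ((p1 d δ + 1 : ℤ) : ℝ) = ((p1 d δ : ℤ) : ℝ) + 1 := by push_cast; ring
    rw [this]
    exact hup

theorem stmt_11 (d δ : ℤ) (hd : 2 ≤ d) (hδ : 1 ≤ δ) :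
    psi d δ (lam d δ : ℝ) < psi d (δ + 1) (lam d (δ + 1) : ℝ) := by
  have hd' : (2 : ℝ) ≤ (d : ℝ) := by exact_mod_cast hd
  have hδ' : (1 : ℝ) ≤ (δ : ℝ) := by exact_mod_cast hδ
  obtain ⟨hs2, hs1⟩ := sqrt_fact d hd
  have hup := main_upper d δ hd hδ
  have hlow := main_lower d (δ + 1) hd (by linarith)
  have hc : ((δ + 1 : ℤ) : ℝ) = (δ : ℝ) + 1 := by push_cast; ring
  rw [hc] at hlow
  set s : ℝ := Real.sqrt ((d : ℝ) ^ 2 - (d : ℝ))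
  nlinarith [hup, hlow, hs1, hd', hδ']
end

section
/- For all integers d ≥ 2 and δ ≥ 1, one has ψ(d,δ,λ) ≤ 4δd² − 2δd − 1, with equality when δ = 1 and strict inequality when δ ≥ 2, where λ is the minimizer of ψ(d,δ,·) among p₁ = δd−1+⌊δ√(d²−d)⌋ and p₂ = p₁+1. -/
open scoped Classical

lemma psi_form (d δ : ℤ) (t : ℝ) (ht : t ≠ 0) :
    psi d δ ((δ:ℝ)*(d:ℝ) - 1 + t)
      = (d:ℝ)*t + (δ:ℝ)^2*(d:ℝ)^2*((d:ℝ)-1)/t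
        + (δ:ℝ)*(d:ℝ)^2 + (δ:ℝ)*(d:ℝ)*((d:ℝ)-1) - 1 := by
  unfold psi
  have h1 : (δ:ℝ)*(d:ℝ) - 1 + t - (δ:ℝ)*(d:ℝ) + 1 = t := by ring
  rw [h1]
  field_simp
  ring

set_option maxHeartbeats 1600000 in
theorem stmt_12 (d δ : ℤ) (hd : 2 ≤ d) (hδ : 1 ≤ δ) :
    psi d δ (lam d δ : ℝ) ≤ 4 * (δ : ℝ) * (d : ℝ) ^ 2 - 2 * (δ : ℝ) * (d : ℝ) - 1 ∧
    (δ = 1 → psi d δ (lam d δ : ℝ) = 4 * (δ : ℝ) * (d : ℝ) ^ 2 - 2 * (δ : ℝ) * (d : ℝ) - 1) ∧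
    (2 ≤ δ → psi d δ (lam d δ : ℝ) < 4 * (δ : ℝ) * (d : ℝ) ^ 2 - 2 * (δ : ℝ) * (d : ℝ) - 1) := by
  have hD : (2:ℝ) ≤ (d:ℝ) := by exact_mod_cast hd
  have hE : (1:ℝ) ≤ (δ:ℝ) := by exact_mod_cast hδ
  set D := (d:ℝ) with hDdef
  set E := (δ:ℝ) with hEdef
  clear_value D E
  have hDpos : (0:ℝ) < D := by linarith
  have hEpos : (0:ℝ) < E := by linarith
  have hnn : (0:ℝ) ≤ D^2 - D := by nlinarith
  set s := Real.sqrt (D^2 - D) with hsdef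
  have hs2 : s^2 = D^2 - D := Real.sq_sqrt hnn
  have hsnn : 0 ≤ s := Real.sqrt_nonneg _
  have hs_ge : D - 1 ≤ s := by nlinarith [hs2, hsnn, sq_nonneg (s - (D-1)), sq_nonneg (s + (D-1))]
  have hgap : (1:ℝ)/2 ≤ (2*D-1) * ((2*D-1) - 2*s) := by
    nlinarith [sq_nonneg (2*s - (2*D-1)), hs2]
  have hgapnn : (0:ℝ) ≤ (2*D-1) - 2*s := by nlinarith [hgap]
  set q : ℤ := ⌊E * s⌋ with hqdef
  have hql : (q:ℝ) ≤ E * s := Int.floor_le _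
  have hqu : E * s < (q:ℝ) + 1 := Int.lt_floor_add_one _
  have hq_ge : E * (D - 1) ≤ (q:ℝ) := by
    have h1 : ((δ * (d-1) : ℤ):ℝ) ≤ E * s := by
      push_cast
      rw [← hDdef, ← hEdef]
      nlinarith [hs_ge, hE]
    have h2 := Int.le_floor.mpr h1
    have h3 : ((δ * (d-1) : ℤ):ℝ) ≤ (q:ℝ) := by exact_mod_cast h2
    calc E * (D - 1) = ((δ * (d-1) : ℤ):ℝ) := by push_cast; rw [← hDdef, ← hEdef]
      _ ≤ (q:ℝ) := h3
  have hqpos : (1:ℝ) ≤ (q:ℝ) := by nlinarith [hq_ge, hE, hD]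
  have hq0 : (q:ℝ) ≠ 0 := by linarith
  have hq10 : (q:ℝ) + 1 ≠ 0 := by linarith
  have hp1 : ((p1 d δ : ℤ):ℝ) = E*D - 1 + (q:ℝ) := by
    unfold p1
    rw [hqdef, hsdef, hEdef, hDdef]
    push_cast
    ring
  -- psi values
  have hEs2 : (E*s)^2 = E^2*(D^2 - D) := by rw [mul_pow, hs2]
  set T : ℝ := 4*E*D^2 - 2*E*D - 1 with hTdef
  clear_value T
  -- core comparison facts
  have key_lt : ∀ t : ℝ, 0 < t → (t - E*s)^2 < t*(E*((2*D-1) - 2*s)) →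
      D*t + E^2*D^2*(D-1)/t + E*D^2 + E*D*(D-1) - 1 < T := by
    intro t ht hlt
    have hident : D*t + E^2*D^2*(D-1)/t = D*(t - E*s)^2/t + 2*D*(E*s) := by
      field_simp
      linear_combination (-1) * hEs2
    have h3 : D*(t - E*s)^2/t < D*(E*((2*D-1)-2*s)) := by
      rw [div_lt_iff₀ ht]
      have h4 := mul_lt_mul_of_pos_left hlt hDpos
      nlinarith [h4]
    calc D*t + E^2*D^2*(D-1)/t + E*D^2 + E*D*(D-1) - 1
        = D*(t - E*s)^2/t + 2*D*(E*s) + E*D^2 + E*D*(D-1) - 1 := by rw [hident]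
      _ < D*(E*((2*D-1)-2*s)) + 2*D*(E*s) + E*D^2 + E*D*(D-1) - 1 := by linarith
      _ = T := by rw [hTdef]; ring
  have key_eq : ∀ t : ℝ, 0 < t → (t - E*s)^2 = t*(E*((2*D-1) - 2*s)) →
      D*t + E^2*D^2*(D-1)/t + E*D^2 + E*D*(D-1) - 1 = T := by
    intro t ht heq
    have hident : D*t + E^2*D^2*(D-1)/t = D*(t - E*s)^2/t + 2*D*(E*s) := by
      field_simp
      linear_combination (-1) * hEs2
    have h3 : D*(t - E*s)^2/t = D*(E*((2*D-1)-2*s)) := by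
      rw [heq]; field_simp
    calc D*t + E^2*D^2*(D-1)/t + E*D^2 + E*D*(D-1) - 1
        = D*(t - E*s)^2/t + 2*D*(E*s) + E*D^2 + E*D*(D-1) - 1 := by rw [hident]
      _ = D*(E*((2*D-1)-2*s)) + 2*D*(E*s) + E*D^2 + E*D*(D-1) - 1 := by rw [h3]
      _ = T := by rw [hTdef]; ring
  have hpsi1 : psi d δ ((p1 d δ : ℤ):ℝ)
      = D*(q:ℝ) + E^2*D^2*(D-1)/(q:ℝ) + E*D^2 + E*D*(D-1) - 1 := by
    rw [hp1, hEdef, hDdef]; exact psi_form d δ (q:ℝ) hq0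
  have hpsi2 : psi d δ (((p1 d δ : ℤ):ℝ) + 1)
      = D*((q:ℝ)+1) + E^2*D^2*(D-1)/((q:ℝ)+1) + E*D^2 + E*D*(D-1) - 1 := by
    have : ((p1 d δ : ℤ):ℝ) + 1 = E*D - 1 + ((q:ℝ)+1) := by rw [hp1]; ring
    rw [this, hEdef, hDdef]; exact psi_form d δ ((q:ℝ)+1) hq10
  clear_value q s
  -- δ = 1 case : both values equal T
  have Fact1 : δ = 1 → psi d δ ((p1 d δ : ℤ):ℝ) = T ∧ psi d δ (((p1 d δ : ℤ):ℝ) + 1) = T := by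
    intro h1
    have hE1 : E = 1 := by rw [hEdef, h1]; norm_num
    have hslt : 2*s ≤ 2*D - 1 := by linarith [hgapnn]
    have hqeq : (q:ℝ) = D - 1 := by
      have h := hql
      have h' := hqu
      rw [hE1, one_mul] at h h'
      have hup : q < d := by
        have hx : (q:ℝ) < D := by linarith
        rw [hDdef] at hx
        exact_mod_cast hx
      have hlow : d - 2 < q := by
        have hx : D - 2 < (q:ℝ) := by linarith
        rw [hDdef] at hx
        have hx' : ((d:ℤ):ℝ) - 2 < (q:ℝ) := hx
        exact_mod_cast hx'
      have hq' : q = d - 1 := by omega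
      rw [hq', hDdef]; push_cast; ring
    constructor
    · rw [hpsi1]
      apply key_eq (q:ℝ) (by linarith)
      rw [hqeq, hE1]
      linear_combination hs2
    · rw [hpsi2]
      apply key_eq ((q:ℝ)+1) (by linarith)
      rw [hqeq, hE1]
      linear_combination hs2
  -- δ ≥ 2 case : one of the two values is < T
  have Fact2 : 2 ≤ δ → psi d δ ((p1 d δ : ℤ):ℝ) < T ∨ psi d δ (((p1 d δ : ℤ):ℝ) + 1) < T := by
    intro h2
    have hE2 : (2:ℝ) ≤ E := by rw [hEdef]; exact_mod_cast h2
    have hq2 : 2*(D-1) ≤ (q:ℝ) := by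
      have h := mul_le_mul_of_nonneg_right hE2 (show (0:ℝ) ≤ D-1 by linarith)
      linarith [hq_ge, h]
    have h2D : (0:ℝ) < 2*D - 1 := by linarith
    have hqE : 4*(D-1) ≤ (q:ℝ)*E := by
      have hqnn : (0:ℝ) ≤ (q:ℝ) := by linarith
      have h := mul_le_mul_of_nonneg_left hE2 hqnn
      linarith [h, hq2]
    by_cases hu : E*s - (q:ℝ) ≤ 1/2
    · left
      rw [hpsi1]
      apply key_lt (q:ℝ) (by linarith)
      have hu4 : ((q:ℝ) - E*s)^2 ≤ 1/4 := by
        have h1 : (0:ℝ) ≤ E*s - (q:ℝ) := by linarith [hql]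
        have h2 := mul_nonneg h1 (show (0:ℝ) ≤ 1/2 - (E*s - (q:ℝ)) by linarith [hu])
        nlinarith [h2, hu]
      have hqEnn : (0:ℝ) ≤ (q:ℝ)*E := mul_nonneg (by linarith) (by linarith)
      have hbig : (q:ℝ)*E*(1/2) ≤ (q:ℝ)*E*((2*D-1)*((2*D-1)-2*s)) :=
        mul_le_mul_of_nonneg_left hgap hqEnn
      have hr : 1/4*(2*D-1) < (q:ℝ)*(E*((2*D-1)-2*s)) * (2*D-1) := by
        calc 1/4*(2*D-1) < 2*(D-1) := by linarith
          _ ≤ (q:ℝ)*E*(1/2) := by linarith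
          _ ≤ (q:ℝ)*E*((2*D-1)*((2*D-1)-2*s)) := hbig
          _ = (q:ℝ)*(E*((2*D-1)-2*s)) * (2*D-1) := by ring
      exact lt_of_le_of_lt hu4 (lt_of_mul_lt_mul_right hr h2D.le)
    · right
      rw [hpsi2]
      apply key_lt ((q:ℝ)+1) (by linarith)
      push_neg at hu
      have hu4 : (((q:ℝ)+1) - E*s)^2 < 1/4 := by
        have h1 : (0:ℝ) < (q:ℝ)+1 - E*s := by linarith [hqu]
        have h2 := mul_pos h1 (show (0:ℝ) < 1/2 - ((q:ℝ)+1 - E*s) by linarith [hu])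
        nlinarith [h2, hu]
      have hqEnn : (0:ℝ) ≤ ((q:ℝ)+1)*E := mul_nonneg (by linarith) (by linarith)
      have hbig : ((q:ℝ)+1)*E*(1/2) ≤ ((q:ℝ)+1)*E*((2*D-1)*((2*D-1)-2*s)) :=
        mul_le_mul_of_nonneg_left hgap hqEnn
      have hqE' : 4*(D-1) ≤ ((q:ℝ)+1)*E := by nlinarith [hqE, hE2, hEpos]
      have hr : 1/4*(2*D-1) ≤ ((q:ℝ)+1)*(E*((2*D-1)-2*s)) * (2*D-1) := by
        calc 1/4*(2*D-1) ≤ 2*(D-1) := by linarith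
          _ ≤ ((q:ℝ)+1)*E*(1/2) := by linarith
          _ ≤ ((q:ℝ)+1)*E*((2*D-1)*((2*D-1)-2*s)) := hbig
          _ = ((q:ℝ)+1)*(E*((2*D-1)-2*s)) * (2*D-1) := by ring
      have : (1:ℝ)/4 ≤ ((q:ℝ)+1)*(E*((2*D-1)-2*s)) := le_of_mul_le_mul_right hr h2D
      linarith
  -- assemble
  have hlamval : psi d δ ((lam d δ : ℤ):ℝ) = psi d δ ((p1 d δ : ℤ):ℝ) ∨
      psi d δ ((lam d δ : ℤ):ℝ) = psi d δ (((p1 d δ : ℤ):ℝ) + 1) := by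
    unfold lam
    split_ifs with hif
    · left; rfl
    · right; push_cast; ring_nf
  have hlammin : psi d δ ((lam d δ : ℤ):ℝ) ≤ psi d δ ((p1 d δ : ℤ):ℝ) ∧
      psi d δ ((lam d δ : ℤ):ℝ) ≤ psi d δ (((p1 d δ : ℤ):ℝ) + 1) := by
    unfold lam
    split_ifs with hif
    · exact ⟨le_refl _, hif⟩
    · push_neg at hif
      constructor
      · push_cast; exact le_of_lt hif
      · push_cast; exact le_refl _
  have goal2 : δ = 1 → psi d δ ((lam d δ : ℤ):ℝ) = T := by
    intro h1
    obtain ⟨e1, e2⟩ := Fact1 h1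
    rcases hlamval with h | h
    · rw [h, e1]
    · rw [h, e2]
  have goal3 : 2 ≤ δ → psi d δ ((lam d δ : ℤ):ℝ) < T := by
    intro h2
    rcases Fact2 h2 with h | h
    · exact lt_of_le_of_lt hlammin.1 h
    · exact lt_of_le_of_lt hlammin.2 h
  have goal1 : psi d δ ((lam d δ : ℤ):ℝ) ≤ T := by
    rcases eq_or_lt_of_le hδ with h | h
    · exact le_of_eq (goal2 h.symm)
    · exact le_of_lt (goal3 h)
  exact ⟨goal1, goal2, goal3⟩
end

section
/- For all integers d ≥ 2 and δ ≥ 2, with λ the minimizer of ψ(d,δ,·) among p₁ = δd−1+⌊δ√(d²−d)⌋ and p₂ = p₁+1, one has ψ(d,δ,λ) ≤ (4d² − 2d − 1/4)δ. -/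
open scoped Classical

lemma psi_formula (d δ : ℤ) (u : ℝ) (hu : u ≠ 0) :
    psi d δ ((δ:ℝ)*(d:ℝ) - 1 + u)
      = (d:ℝ)*u + (δ:ℝ)^2*((d:ℝ)^2-(d:ℝ))*(d:ℝ)/u
        + 2*(δ:ℝ)*(d:ℝ)^2 - (δ:ℝ)*(d:ℝ) - 1 := by
  unfold psi
  have h1 : (δ:ℝ)*(d:ℝ) - 1 + u - (δ:ℝ)*(d:ℝ) + 1 = u := by ring
  rw [h1]
  field_simp
  ring

lemma main_est (D Δ u s : ℝ) (hD : 2 ≤ D) (hΔ : 2 ≤ Δ) (hs0 : 0 ≤ s)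
    (hssq : s^2 = D^2 - D) (hu1 : Δ*s - 1 ≤ u) (hu2 : (u - Δ*s)^2 ≤ 1/4) :
    D*u + Δ^2*(D^2-D)*D/u + 2*Δ*D^2 - Δ*D - 1 ≤ (4*D^2 - 2*D - 1/4) * Δ := by
  have hs_lb : D - 1 ≤ s := by
    nlinarith [sq_nonneg (s + (D-1))]
  have ht : 2*D - 2 ≤ Δ*s := by
    nlinarith [mul_nonneg (by linarith : (0:ℝ) ≤ Δ - 2) hs0]
  have hupos : 0 < u := by nlinarith
  have hE : D*u + Δ^2*(D^2-D)*D/u = 2*D*(Δ*s) + D*(u-Δ*s)^2/u := by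
    field_simp
    linear_combination (-(Δ^2)) * hssq
  have hE2 : D*(u-Δ*s)^2/u ≤ 1 := by
    rw [div_le_one hupos]
    nlinarith [hu2, hD, hu1, ht]
  have haux : (0:ℝ) ≤ 2*D*s + (2*D^2 - D - 1/4) := by
    nlinarith [mul_nonneg (by linarith : (0:ℝ) ≤ 2*D) hs0]
  have h1 : 2*D*s ≤ 2*D^2 - D - 1/4 := by
    nlinarith [haux, hssq]
  have hS : 2*D*(Δ*s) ≤ (2*D^2 - D - 1/4)*Δ := by
    nlinarith [mul_le_mul_of_nonneg_right h1 (by linarith : (0:ℝ) ≤ Δ)]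
  rw [hE]
  linarith [hE2, hS]

theorem stmt_14 (d δ : ℤ) (hd : 2 ≤ d) (hδ : 2 ≤ δ) :
    psi d δ (lam d δ : ℝ) ≤
      (4 * (d : ℝ) ^ 2 - 2 * (d : ℝ) - 1 / 4) * (δ : ℝ) := by
  have hD : (2:ℝ) ≤ (d:ℝ) := by exact_mod_cast hd
  have hΔ : (2:ℝ) ≤ (δ:ℝ) := by exact_mod_cast hδ
  have hs2 : (0:ℝ) ≤ (d:ℝ)^2 - (d:ℝ) := by nlinarith
  have hssq := Real.sq_sqrt hs2
  set s := Real.sqrt ((d:ℝ)^2 - (d:ℝ)) with hsdef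
  have hs0 : 0 ≤ s := Real.sqrt_nonneg _
  have hs_lb : (d:ℝ) - 1 ≤ s := by
    rw [hsdef]
    have h := Real.sqrt_le_sqrt (show ((d:ℝ)-1)^2 ≤ (d:ℝ)^2 - (d:ℝ) by nlinarith)
    rwa [Real.sqrt_sq (by linarith)] at h
  set t := (δ:ℝ) * s with htdef
  have ht_lb : 2*(d:ℝ) - 2 ≤ t := by
    nlinarith [mul_nonneg (by linarith : (0:ℝ) ≤ (δ:ℝ) - 2) hs0]
  have hfl : t - 1 < (⌊t⌋:ℝ) := Int.sub_one_lt_floor t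
  have hfl2 : (⌊t⌋:ℝ) ≤ t := Int.floor_le t
  have hflgt : (1:ℝ) < (⌊t⌋:ℝ) := by linarith
  have hp1 : ((p1 d δ : ℤ) : ℝ) = (δ:ℝ)*(d:ℝ) - 1 + (⌊t⌋:ℝ) := by
    unfold p1
    push_cast
    ring
  have hcase : psi d δ (lam d δ : ℝ) ≤ psi d δ ((p1 d δ : ℤ) : ℝ) ∧
      psi d δ (lam d δ : ℝ) ≤ psi d δ (((p1 d δ : ℤ) : ℝ) + 1) := by
    unfold lam
    split_ifs with h
    · exact ⟨le_rfl, h⟩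
    · push_cast
      exact ⟨(not_le.mp h).le, le_rfl⟩
  by_cases hhalf : t - (⌊t⌋:ℝ) ≤ 1/2
  · refine le_trans hcase.1 ?_
    rw [hp1, psi_formula d δ _ (ne_of_gt (by linarith))]
    exact main_est _ _ _ _ hD hΔ hs0 hssq (by linarith) (by nlinarith)
  · refine le_trans hcase.2 ?_
    have heq : ((p1 d δ : ℤ) : ℝ) + 1 = (δ:ℝ)*(d:ℝ) - 1 + ((⌊t⌋:ℝ) + 1) := by
      rw [hp1]; ring
    rw [heq, psi_formula d δ _ (ne_of_gt (by linarith))]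
    exact main_est _ _ _ _ hD hΔ hs0 hssq (by linarith) (by nlinarith)
end

section
/- For any real h > 1, if x ≥ 1 + 2·ln(h)/ln(ln(h+2)), then x^x ≥ h. -/
theorem stmt_15 (h x : ℝ) (hh : 1 < h)
    (hx : 1 + 2 * Real.log h / Real.log (Real.log (h + 2)) ≤ x) :
    h ≤ x ^ x := by
  set u := Real.log (h + 2) with hu
  set L := Real.log u with hLdef
  have hh0 : (0:ℝ) < h := by linarith
  have hlogh : 0 < Real.log h := Real.log_pos hh
  have hu1 : 1 < u := by
    rw [hu, Real.lt_log_iff_exp_lt (by linarith)]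
    have := Real.exp_one_lt_d9
    linarith
  have hL0 : 0 < L := Real.log_pos hu1
  set t := 2 * Real.log h / L with htdef
  have ht0 : 0 < t := div_pos (by linarith) hL0
  have hx1 : (1:ℝ) < x := by
    have : 1 + t ≤ x := hx
    linarith
  -- log(1+t) ≥ t/(1+t)
  have h1t : (0:ℝ) < 1 + t := by linarith
  have hlog_lb : t / (1 + t) ≤ Real.log (1 + t) := by
    have := Real.log_le_sub_one_of_pos (show (0:ℝ) < (1+t)⁻¹ by positivity)
    rw [Real.log_inv] at this
    have hne : (1+t) ≠ 0 := by positivity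
    rw [div_le_iff₀ h1t]
    rw [inv_eq_one_div] at this
    have h2 : (1 - 1/(1+t)) * (1+t) = t := by field_simp; ring
    nlinarith [this]
  have key : Real.log h ≤ (1 + t) * Real.log (1 + t) := by
    rcases le_or_gt L 2 with hL2 | hL2
    · -- easy case: (1+t)log(1+t) ≥ t ≥ log h
      have h1 : t ≤ (1+t) * Real.log (1+t) := by
        have := mul_le_mul_of_nonneg_left hlog_lb (le_of_lt h1t)
        calc t = (1+t) * (t/(1+t)) := by field_simp
          _ ≤ (1+t) * Real.log (1+t) := this
      have h2 : Real.log h ≤ t := by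
        rw [htdef, le_div_iff₀ hL0]
        nlinarith
      linarith
    · -- hard case: L > 2
      set s := Real.sqrt u with hs
      have hu0 : (0:ℝ) < u := by linarith
      have hs2 : s ^ 2 = u := Real.sq_sqrt (le_of_lt hu0)
      have hsL : Real.log s = L / 2 := by
        rw [hs, Real.log_sqrt (le_of_lt hu0), hLdef]
      have hs0 : 0 < s := Real.sqrt_pos.mpr hu0
      have hsub : Real.log s ≤ s - 1 := Real.log_le_sub_one_of_pos hs0
      have hLs : L ≤ 2 * s - 2 := by
        have h' := hsub
        rw [hsL] at h'
        linarith
      -- u ≥ exp 2 > 4 so s ≥ 2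
      have hu4 : (4:ℝ) < u := by
        have h2u : Real.exp 2 < u := by
          rw [hLdef] at hL2
          have := (Real.lt_log_iff_exp_lt hu0).mp hL2
          exact this
        have : (4:ℝ) < Real.exp 2 := by
          have h1 := Real.exp_one_gt_d9
          have : Real.exp 2 = Real.exp 1 * Real.exp 1 := by
            rw [← Real.exp_add]; norm_num
          nlinarith
        linarith
      have hsge2 : (2:ℝ) ≤ s := by
        nlinarith [hs2, hs0]
      -- log 3 ≤ 2
      have hlog3 : Real.log 3 ≤ 2 := by
        have := Real.log_le_sub_one_of_pos (show (0:ℝ) < 3 by norm_num)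
        linarith
      -- u ≤ log 3 + log h
      have huub : u ≤ Real.log 3 + Real.log h := by
        rw [hu, ← Real.log_mul (by norm_num) (ne_of_gt hh0)]
        exact Real.log_le_log (by linarith) (by linarith)
      -- 2 log h ≥ (s-1) * L
      have hkey2 : (s - 1) * L ≤ 2 * Real.log h := by
        nlinarith [hs2, hsge2, hLs, huub, hlog3, hL0]
      -- so t ≥ s - 1
      have hts : s - 1 ≤ t := by
        rw [htdef, le_div_iff₀ hL0]
        linarith
      have hlog_ge : L / 2 ≤ Real.log (1 + t) := by
        rw [← hsL]
        exact Real.log_le_log hs0 (by linarith)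
      have htL : t * L = 2 * Real.log h := by
        rw [htdef]; field_simp
      calc Real.log h ≤ (1 + t) * (L / 2) := by nlinarith
        _ ≤ (1 + t) * Real.log (1 + t) :=
          mul_le_mul_of_nonneg_left hlog_ge (le_of_lt h1t)
  have hxlog : Real.log h ≤ x * Real.log x := by
    have h1 : Real.log (1 + t) ≤ Real.log x := Real.log_le_log h1t hx
    have h2 : 0 ≤ Real.log (1 + t) := Real.log_nonneg (by linarith)
    calc Real.log h ≤ (1 + t) * Real.log (1 + t) := key
      _ ≤ x * Real.log x := by nlinarith
  rw [Real.rpow_def_of_pos (by linarith : (0:ℝ) < x)]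
  calc h = Real.exp (Real.log h) := (Real.exp_log hh0).symm
    _ ≤ Real.exp (Real.log x * x) := Real.exp_le_exp.mpr (by linarith [hxlog, mul_comm x (Real.log x)])
end
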